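/- Let (X,d) be a metric space and 𝔅 a bornology on X with closed base such that X ∉ 𝔅. If every 𝔅^s-cover of X contains a countable subfamily that is a γ_{𝔅^s}-cover of X, then X satisfies S₁(𝒪_{𝔅^s},Γ_{𝔅^s}). -/

import Mathlib

open Set Metric

variable {X : Type*} [MetricSpace X]

/-- The δ-enlargement of a set `B`: union of open δ-balls around points of `B`. -/
def enl (B : Set X) (δ : ℝ) : Set X := ⋃ b ∈ B, Metric.ball b δ

/-- A bornology (in the sense of Hu/Hogbe-Nlend): a family of nonempty subsets
covering `X`, closed under finite unions and hereditary. -/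
def IsBorn (𝔅 : Set (Set X)) : Prop :=
  (∀ B ∈ 𝔅, B.Nonempty) ∧ (⋃₀ 𝔅 = Set.univ) ∧
  (∀ B₁ ∈ 𝔅, ∀ B₂ ∈ 𝔅, B₁ ∪ B₂ ∈ 𝔅) ∧
  (∀ B ∈ 𝔅, ∀ A : Set X, A ⊆ B → A.Nonempty → A ∈ 𝔅)

/-- The bornology has a base consisting of closed sets. -/
def HasClosedBase (𝔅 : Set (Set X)) : Prop :=
  ∃ 𝔅₀ ⊆ 𝔅, (∀ B ∈ 𝔅₀, IsClosed B) ∧ ∀ B ∈ 𝔅, ∃ B₀ ∈ 𝔅₀, B ⊆ B₀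

/-- A strong 𝔅-cover (𝔅ˢ-cover): an open cover 𝒰 of X with X ∉ 𝒰 such that for
every `B ∈ 𝔅` some δ-enlargement of `B` lies in a member of 𝒰. -/
def IsBsCover (𝔅 : Set (Set X)) (𝒰 : Set (Set X)) : Prop :=
  (∀ U ∈ 𝒰, IsOpen U) ∧ Set.univ ∉ 𝒰 ∧ ⋃₀ 𝒰 = Set.univ ∧
  ∀ B ∈ 𝔅, ∃ U ∈ 𝒰, ∃ δ > 0, enl B δ ⊆ U

/-- A γ_{𝔅ˢ}-cover: an infinite countable open cover `(U n)` such that for every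
`B ∈ 𝔅` there are `n₀` and positive reals `δ n` (for `n ≥ n₀`) with
`enl B (δ n) ⊆ U n` for all `n ≥ n₀`. -/
def IsGammaCover (𝔅 : Set (Set X)) (U : ℕ → Set X) : Prop :=
  (∀ n, IsOpen (U n)) ∧ (⋃ n, U n) = Set.univ ∧ (Set.range U).Infinite ∧
  ∀ B ∈ 𝔅, ∃ n₀ : ℕ, ∃ δ : ℕ → ℝ, ∀ n ≥ n₀, 0 < δ n ∧ enl B (δ n) ⊆ U n

/-- `g` belongs to the basic τˢ_𝔅-neighborhood `[B,ε]ˢ(f)`. -/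
def SNbhd (B : Set X) (ε : ℝ) (f g : C(X, ℝ)) : Prop :=
  ∃ δ > 0, ∀ x ∈ enl B δ, |g x - f x| < ε

/-- `f` lies in the τˢ_𝔅-closure of `A`. -/
def SCl (𝔅 : Set (Set X)) (A : Set C(X, ℝ)) (f : C(X, ℝ)) : Prop :=
  ∀ B ∈ 𝔅, ∀ ε > 0, ∃ g ∈ A, SNbhd B ε f g

/-- The sequence `g` τˢ_𝔅-converges to `f`. -/
def SConv (𝔅 : Set (Set X)) (g : ℕ → C(X, ℝ)) (f : C(X, ℝ)) : Prop :=
  ∀ B ∈ 𝔅, ∀ ε > 0, ∃ N : ℕ, ∀ n ≥ N, SNbhd B ε f (g n)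

lemma enl_mono {B : Set X} {a b : ℝ} (h : a ≤ b) : enl B a ⊆ enl B b :=
  Set.iUnion₂_mono fun x _ => Metric.ball_subset_ball h

lemma subset_enl (B : Set X) {δ : ℝ} (h : 0 < δ) : B ⊆ enl B δ := fun x hx =>
  Set.mem_biUnion hx (Metric.mem_ball_self h)

lemma singleton_mem_born {𝔅 : Set (Set X)} (h𝔅 : IsBorn 𝔅) (x : X) : ({x} : Set X) ∈ 𝔅 := by
  obtain ⟨B, hB, hxB⟩ := (Set.sUnion_eq_univ_iff.1 h𝔅.2.1) x
  exact h𝔅.2.2.2 B hB {x} (Set.singleton_subset_iff.2 hxB) ⟨x, rfl⟩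

lemma exists_ge_of_infinite (s : Set ℕ) (hs : s.Infinite) (n : ℕ) : ∃ j ∈ s, n ≤ j := by
  by_contra h
  push_neg at h
  exact hs ((Set.finite_Iio n).subset fun j hj => h j hj)

lemma exists_infinite_fiber' {α : Type*} (f : ℕ → α) (s : Set ℕ) (hs : s.Infinite)
    (t : Finset α) (ht : ∀ j ∈ s, f j ∈ t) : ∃ a ∈ t, {j | j ∈ s ∧ f j = a}.Infinite := by
  by_contra h
  push_neg at h
  apply hs
  have hsub : s ⊆ ⋃ a ∈ t, {j | j ∈ s ∧ f j = a} := fun j hj =>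
    Set.mem_biUnion (ht j hj) ⟨hj, rfl⟩
  exact Set.Finite.subset
    (Set.Finite.biUnion t.finite_toSet fun a ha => (h a ha)) hsub

lemma isGammaCover_of {𝔅 : Set (Set X)} (h𝔅 : IsBorn 𝔅) {u : ℕ → Set X}
    (hop : ∀ n, IsOpen (u n)) (hne : ∀ n, u n ≠ Set.univ)
    (habs : ∀ B ∈ 𝔅, ∃ n₀ : ℕ, ∃ δ : ℕ → ℝ, ∀ n ≥ n₀, 0 < δ n ∧ enl B (δ n) ⊆ u n) :
    IsGammaCover 𝔅 u := by
  have hcov : (⋃ n, u n) = Set.univ := by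
    apply Set.eq_univ_of_forall
    intro x
    obtain ⟨B, hB, hxB⟩ := (Set.sUnion_eq_univ_iff.1 h𝔅.2.1) x
    obtain ⟨n₀, δ, hδ⟩ := habs B hB
    exact Set.mem_iUnion.2 ⟨n₀, (hδ n₀ le_rfl).2 (subset_enl B (hδ n₀ le_rfl).1 hxB)⟩
  refine ⟨hop, hcov, ?_, habs⟩
  by_contra hfin
  rw [Set.not_infinite] at hfin
  obtain ⟨a, -, hfib⟩ := exists_infinite_fiber' u Set.univ Set.infinite_univ hfin.toFinset
    (fun j _ => hfin.mem_toFinset.2 (Set.mem_range_self j))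
  have hauniv : a = Set.univ := by
    apply Set.eq_univ_of_univ_subset
    rw [← h𝔅.2.1]
    rintro x ⟨B, hB, hxB⟩
    obtain ⟨n₀, δ, hδ⟩ := habs B hB
    obtain ⟨j, hjfib, hjge⟩ := exists_ge_of_infinite _ hfib n₀
    have hx : x ∈ u j := (hδ j hjge).2 (subset_enl B (hδ j hjge).1 hxB)
    rwa [hjfib.2] at hx
  obtain ⟨j, hjfib, -⟩ := exists_ge_of_infinite _ hfib 0
  exact hne j (hjfib.2.trans hauniv)

theorem statement16 (𝔅 : Set (Set X)) (h𝔅 : IsBorn 𝔅) (hcb : HasClosedBase 𝔅)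
    (hX : Set.univ ∉ 𝔅)
    (hsub : ∀ 𝒰 : Set (Set X), IsBsCover 𝔅 𝒰 →
      ∃ u : ℕ → Set X, (∀ n, u n ∈ 𝒰) ∧ IsGammaCover 𝔅 u) :
    ∀ 𝒰 : ℕ → Set (Set X), (∀ n, IsBsCover 𝔅 (𝒰 n)) →
      ∃ u : ℕ → Set X, (∀ n, u n ∈ 𝒰 n) ∧ IsGammaCover 𝔅 u := by
  intro 𝒰 h𝒰
  obtain ⟨w, hwmem, hwγ⟩ := hsub (𝒰 0) (h𝒰 0)
  set 𝒲 : Set (Set X) :=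
    {W | ∃ m : ℕ, ∃ f : ℕ → Set X, (∀ i ≤ m, f i ∈ 𝒰 i) ∧
      W = w m ∩ ⋂ i ∈ Finset.range (m + 1), f i} with h𝒲def
  -- absorption property of 𝒲
  have h𝒲abs : ∀ B ∈ 𝔅, ∃ W ∈ 𝒲, ∃ δ > 0, enl B δ ⊆ W := by
    intro B hB
    obtain ⟨m₀, δw, hδw⟩ := hwγ.2.2.2 B hB
    choose f hf δ' hδ'pos hδ'sub using fun i => (h𝒰 i).2.2.2 B hB
    have hsne : (Finset.range (m₀ + 1)).Nonempty := ⟨0, Finset.mem_range.2 (Nat.succ_pos _)⟩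
    set δm := min (δw m₀) ((Finset.range (m₀ + 1)).inf' hsne δ') with hδmdef
    have hδmpos : 0 < δm :=
      lt_min (hδw m₀ le_rfl).1 ((Finset.lt_inf'_iff hsne).2 fun i _ => hδ'pos i)
    refine ⟨w m₀ ∩ ⋂ i ∈ Finset.range (m₀ + 1), f i, ⟨m₀, f, fun i _ => hf i, rfl⟩,
      δm, hδmpos, ?_⟩
    intro x hx
    refine ⟨(hδw m₀ le_rfl).2 (enl_mono (min_le_left _ _) hx), ?_⟩
    refine Set.mem_iInter₂.2 fun i hi => ?_
    exact hδ'sub i (enl_mono ((min_le_right _ _).trans (Finset.inf'_le _ hi)) hx)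
  have h𝒲cover : IsBsCover 𝔅 𝒲 := by
    refine ⟨?_, ?_, ?_, h𝒲abs⟩
    · rintro W ⟨m, f, hf, rfl⟩
      exact ((h𝒰 0).1 _ (hwmem m)).inter (isOpen_biInter_finset fun i hi =>
        (h𝒰 i).1 _ (hf i (Nat.lt_succ_iff.1 (Finset.mem_range.1 hi))))
    · rintro ⟨m, f, hf, hEq⟩
      have hf0 : f 0 = Set.univ := by
        apply Set.eq_univ_of_univ_subset
        intro x _
        have hx : x ∈ w m ∩ ⋂ i ∈ Finset.range (m + 1), f i := by
          rw [← hEq]; trivial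
        exact Set.mem_iInter₂.1 hx.2 0 (Finset.mem_range.2 (Nat.succ_pos _))
      exact (h𝒰 0).2.1 (hf0 ▸ hf 0 (Nat.zero_le m))
    · apply Set.eq_univ_of_forall
      intro x
      obtain ⟨W, hW, δ, hδ, hsub'⟩ := h𝒲abs {x} (singleton_mem_born h𝔅 x)
      exact ⟨W, hW, hsub' (subset_enl _ hδ rfl)⟩
  obtain ⟨z, hzmem, hzγ⟩ := hsub 𝒲 h𝒲cover
  by_cases hA : ∀ n : ℕ, ∃ j ≥ n, ∃ m ≥ n, ∃ f : ℕ → Set X,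
      (∀ i ≤ m, f i ∈ 𝒰 i) ∧ z j = w m ∩ ⋂ i ∈ Finset.range (m + 1), f i
  · -- Case A: unbounded representation lengths
    choose j hjge m hmge f hf hzeq using hA
    refine ⟨fun n => f n n, fun n => hf n n (hmge n), ?_⟩
    apply isGammaCover_of h𝔅
    · intro n
      exact (h𝒰 n).1 _ (hf n n (hmge n))
    · intro n hEq
      exact (h𝒰 n).2.1 (hEq ▸ hf n n (hmge n))
    · intro B hB
      obtain ⟨j₀, δ, hδ⟩ := hzγ.2.2.2 B hB
      refine ⟨j₀, fun n => δ (j n), fun n hn => ?_⟩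
      have hjn : j₀ ≤ j n := le_trans hn (hjge n)
      refine ⟨(hδ (j n) hjn).1, ?_⟩
      intro x hx
      have hxz : x ∈ z (j n) := (hδ (j n) hjn).2 hx
      rw [hzeq n] at hxz
      exact Set.mem_iInter₂.1 hxz.2 n (Finset.mem_range.2 (Nat.lt_succ_of_le (hmge n)))
  · -- Case B: bounded lengths, derive a contradiction
    exfalso
    push_neg at hA
    obtain ⟨N, hN⟩ := hA
    choose mz fz hfz hzeq using hzmem
    have hmlt : ∀ j, N ≤ j → mz j < N := by
      intro j hj
      by_contra hge
      push_neg at hge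
      exact hN j hj (mz j) hge (fz j) (hfz j) (hzeq j)
    obtain ⟨m', -, hfib⟩ := exists_infinite_fiber' mz (Set.Ici N) (Set.Ici_infinite N)
      (Finset.range N) (fun j hj => Finset.mem_range.2 (hmlt j hj))
    have huniv : w m' = Set.univ := by
      apply Set.eq_univ_of_univ_subset
      intro x _
      obtain ⟨j₀, δ, hδ⟩ := hzγ.2.2.2 {x} (singleton_mem_born h𝔅 x)
      obtain ⟨j, hjfib, hjge⟩ := exists_ge_of_infinite _ hfib j₀
      have hx : x ∈ z j := (hδ j hjge).2 (subset_enl _ (hδ j hjge).1 rfl)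
      rw [hzeq j] at hx
      rw [← hjfib.2]
      exact hx.1
    exact (h𝒰 0).2.1 (huniv ▸ hwmem m')
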